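/- Let q be an odd prime power and n a power of 2 such that x^n + 1 = h(x)·h*(x) over F_q, where h is monic irreducible of degree n/2 and h* ≠ h is its monic reciprocal polynomial. Then the number of n×n negacirculant matrices A over F_q with A Aᵀ = −I equals q^{n/2} − 1; in particular, self-dual double negacirculant codes of length 2n over F_q exist. -/

import Mathlib

open Polynomial

/-- Negacirculant matrix predicate. -/
def IsNegacirculant {F : Type*} [Ring F] {n : ℕ} (A : Matrix (Fin n) (Fin n) F) : Prop :=
  ∃ a : Fin n → F, ∀ i j : Fin n,
    A i j = if (i : ℕ) ≤ (j : ℕ) then a (j - i) else - a (j - i)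

/-- The monic reciprocal polynomial of `h` (for `h` with `h 0 ≠ 0`). -/
noncomputable def recip {F : Type*} [Field F] (h : F[X]) : F[X] :=
  C (h.coeff 0)⁻¹ * h.reverse

section NegaMatrix

variable {F : Type*} [Field F] {n : ℕ}

/-- The basic negashift matrix. -/
def Nmat (F : Type*) [Field F] (n : ℕ) : Matrix (Fin n) (Fin n) F :=
  Matrix.of fun i j => if (i:ℕ)+1 = (j:ℕ) then 1 else if ((i:ℕ)+1 = n ∧ (j:ℕ) = 0) then -1 else 0

lemma mul_Nmat (M : Matrix (Fin n) (Fin n) F) (i j : Fin n) :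
    (M * Nmat F n) i j =
      (if (j:ℕ) = 0 then -1 else 1) * M i ⟨((j:ℕ)+(n-1)) % n, Nat.mod_lt _ j.pos⟩ := by
  have hj := j.isLt
  have key : ((j:ℕ) + (n-1)) % n = if (j:ℕ) = 0 then n - 1 else (j:ℕ) - 1 := by
    rcases Nat.eq_zero_or_pos (j:ℕ) with h0 | h0
    · simp [h0, Nat.mod_eq_of_lt (by omega : n - 1 < n)]
    · have h2 : (j:ℕ) + (n-1) = ((j:ℕ)-1) + n := by omega
      rw [if_neg (by omega), h2, Nat.add_mod_right, Nat.mod_eq_of_lt (by omega)]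
  set k₀ : Fin n := ⟨((j:ℕ)+(n-1)) % n, Nat.mod_lt _ j.pos⟩ with hk₀
  have kv : (k₀:ℕ) = ((j:ℕ)+(n-1)) % n := rfl
  rw [Matrix.mul_apply, Finset.sum_eq_single k₀]
  · simp only [Nmat, Matrix.of_apply, kv]
    rcases Nat.eq_zero_or_pos (j:ℕ) with h0 | h0
    · have kj : ((j:ℕ)+(n-1)) % n = n - 1 := by rw [key, if_pos h0]
      rw [if_neg (by omega), if_pos ⟨by omega, h0⟩, if_pos h0]
      ring
    · have kj : ((j:ℕ)+(n-1)) % n = (j:ℕ) - 1 := by rw [key, if_neg (by omega)]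
      rw [if_pos (by omega), if_neg (by omega)]
      ring
  · intro b _ hb
    have hb' : (b:ℕ) ≠ (k₀:ℕ) := fun hh => hb (Fin.ext hh)
    rw [kv] at hb'
    have hbl := b.isLt
    simp only [Nmat, Matrix.of_apply]
    rcases Nat.eq_zero_or_pos (j:ℕ) with h0 | h0
    · have kj : ((j:ℕ)+(n-1)) % n = n - 1 := by rw [key, if_pos h0]
      rw [kj] at hb'
      split_ifs with h1 h2 <;> first | (exfalso; omega) | exact mul_zero _
    · have kj : ((j:ℕ)+(n-1)) % n = (j:ℕ) - 1 := by rw [key, if_neg (by omega)]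
      rw [kj] at hb'
      split_ifs with h1 h2 <;> first | (exfalso; omega) | exact mul_zero _
  · exact fun hc => absurd (Finset.mem_univ k₀) hc

lemma Nmat_pow (t : ℕ) : t ≤ n → ∀ i j : Fin n,
    ((Nmat F n) ^ t) i j =
      if (j:ℕ) = (i:ℕ) + t then 1 else if (j:ℕ) + n = (i:ℕ) + t then -1 else 0 := by
  induction t with
  | zero =>
    intro _ i j
    have hj := j.isLt
    rw [pow_zero]
    by_cases hij : i = j
    · rw [hij, Matrix.one_apply_eq, if_pos (by omega)]
    · rw [Matrix.one_apply_ne' (by exact fun hh => hij hh.symm)]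
      have : (i:ℕ) ≠ (j:ℕ) := fun hh => hij (Fin.ext hh)
      rw [if_neg (by omega), if_neg (by omega)]
  | succ t ih =>
    intro ht i j
    rw [pow_succ, mul_Nmat, ih (by omega)]
    have hj := j.isLt
    have hi := i.isLt
    simp only [Fin.val_mk]
    have key : ((j:ℕ) + (n-1)) % n = if (j:ℕ) = 0 then n - 1 else (j:ℕ) - 1 := by
      rcases Nat.eq_zero_or_pos (j:ℕ) with h0 | h0
      · simp [h0, Nat.mod_eq_of_lt (by omega : n - 1 < n)]
      · have h2 : (j:ℕ) + (n-1) = ((j:ℕ)-1) + n := by omega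
        rw [if_neg (by omega), h2, Nat.add_mod_right, Nat.mod_eq_of_lt (by omega)]
    rcases Nat.eq_zero_or_pos (j:ℕ) with h0 | h0
    · have kj : ((j:ℕ)+(n-1)) % n = n - 1 := by rw [key, if_pos h0]
      simp only [kj]; split_ifs <;> first | (exfalso; omega) | ring
    · have kj : ((j:ℕ)+(n-1)) % n = (j:ℕ) - 1 := by rw [key, if_neg (by omega)]
      simp only [kj]; split_ifs <;> first | (exfalso; omega) | ring

noncomputable def pa (a : Fin n → F) : F[X] := ∑ t : Fin n, C (a t) * X ^ (t:ℕ)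

lemma pa_coeff (a : Fin n → F) (k : ℕ) :
    (pa a).coeff k = if hk : k < n then a ⟨k, hk⟩ else 0 := by
  rw [pa, finset_sum_coeff]
  simp only [coeff_C_mul, coeff_X_pow, mul_ite, mul_one, mul_zero]
  split
  · next hk =>
    rw [Finset.sum_eq_single (⟨k, hk⟩ : Fin n)]
    · simp
    · intro b _ hb
      rw [if_neg (fun hh => hb (Fin.ext (by simpa using hh.symm)))]
    · exact fun hc => absurd (Finset.mem_univ _) hc
  · next hk =>
    apply Finset.sum_eq_zero
    intro t _
    rw [if_neg (fun hh => hk (by rw [hh]; exact t.isLt))]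

lemma pa_eq (p : F[X]) (hp : p.natDegree < n) : pa (fun t : Fin n => p.coeff t) = p := by
  ext k
  rw [pa_coeff]
  split
  · rfl
  · next hk => exact (coeff_eq_zero_of_natDegree_lt (by omega)).symm

lemma pa_zero : pa (0 : Fin n → F) = 0 := by simp [pa]

lemma Nmat_pow_n (hn : 0 < n) : (Nmat F n) ^ n = -1 := by
  ext i j
  rw [Nmat_pow n le_rfl]
  have hi := i.isLt; have hj := j.isLt
  by_cases hij : i = j
  · subst hij
    rw [if_neg (by omega), if_pos (by omega)]
    simp
  · have : (i:ℕ) ≠ (j:ℕ) := fun hh => hij (Fin.ext hh)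
    rw [if_neg (by omega), if_neg (by omega)]
    simp [Matrix.one_apply_ne' (fun hh => hij hh.symm)]

lemma aeval_pa (a : Fin n → F) :
    aeval (Nmat F n) (pa a) = ∑ t : Fin n, a t • (Nmat F n) ^ (t:ℕ) := by
  rw [pa, map_sum]
  refine Finset.sum_congr rfl fun t _ => ?_
  rw [map_mul, aeval_C, map_pow, aeval_X, Algebra.smul_def]

lemma sub_val (i j : Fin n) :
    ((j - i : Fin n) : ℕ) = if (i:ℕ) ≤ (j:ℕ) then (j:ℕ) - i else (j:ℕ) + n - i := by
  have hi := i.isLt; have hj := j.isLt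
  rw [Fin.sub_def]
  simp only
  split
  · next hle => rw [(by omega : n - (i:ℕ) + (j:ℕ) = ((j:ℕ) - i) + n), Nat.add_mod_right,
      Nat.mod_eq_of_lt (by omega)]
  · next hgt => rw [Nat.mod_eq_of_lt (by omega)]; omega

lemma aeval_pa_apply (a : Fin n → F) (i j : Fin n) :
    (aeval (Nmat F n) (pa a)) i j =
      if (i:ℕ) ≤ (j:ℕ) then a (j - i) else - a (j - i) := by
  have hi := i.isLt; have hj := j.isLt
  rw [aeval_pa, Matrix.sum_apply]
  simp only [Matrix.smul_apply, smul_eq_mul]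
  rw [Finset.sum_eq_single (j - i)]
  · rw [Nmat_pow _ (le_of_lt (j - i).isLt) i j, sub_val]
    split
    · next hle => rw [if_pos (by omega)]; ring
    · next hgt => rw [if_neg (by omega), if_pos (by omega)]; ring
  · intro b _ hb
    have hb' : (b:ℕ) ≠ ((j - i : Fin n):ℕ) := fun hh => hb (Fin.ext hh)
    rw [sub_val] at hb'
    have hbl := b.isLt
    rw [Nmat_pow _ (le_of_lt b.isLt) i j]
    split_ifs at hb' with hc
    · rw [if_neg (by omega), if_neg (by omega), mul_zero]
    · rw [if_neg (by omega), if_neg (by omega), mul_zero]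
  · exact fun hc => absurd (Finset.mem_univ _) hc

lemma transpose_aeval (M : Matrix (Fin n) (Fin n) F) (p : F[X]) :
    (aeval M p).transpose = aeval M.transpose p := by
  induction p using Polynomial.induction_on' with
  | add p q hp hq => rw [map_add, Matrix.transpose_add, hp, hq, map_add]
  | monomial k c =>
    rw [← C_mul_X_pow_eq_monomial, map_mul, map_mul, aeval_C, map_pow, map_pow, aeval_X, aeval_X,
      aeval_C, ← Algebra.smul_def, ← Algebra.smul_def, Matrix.transpose_smul,
      Matrix.transpose_pow]

lemma Nmat_transpose : (Nmat F n).transpose = -((Nmat F n) ^ (n-1)) := by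
  ext i j
  rw [Matrix.transpose_apply, Matrix.neg_apply, Nmat_pow (n-1) (by omega) i j]
  have hi := i.isLt; have hj := j.isLt
  simp only [Nmat, Matrix.of_apply]
  split_ifs <;> first | (exfalso; omega) | ring

lemma quot_mk_eval₂ (I : Ideal F[X]) (p : F[X]) :
    eval₂ ((Ideal.Quotient.mk I).comp C) (Ideal.Quotient.mk I X) p = Ideal.Quotient.mk I p := by
  rw [← hom_eval₂, eval₂_C_X]


lemma key_pows₁ {R : Type*} [CommRing R] {n : ℕ} (h2 : 2 ≤ n) (hEn : Even n)
    (hOn : Odd (n-1)) (x y : R) (hy : y = -(x^(n-1))) (hxn : x^n = -1) :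
    y ^ n = -1 ∧ x * y = 1 := by
  subst hy
  constructor
  · rw [hEn.neg_pow, ← pow_mul, show (n-1) * n = n * (n-1) from mul_comm _ _, pow_mul, hxn,
      hOn.neg_one_pow]
  · have h1 : x * x ^ (n-1) = x ^ n := by
      conv_rhs => rw [show n = n - 1 + 1 by omega]
      rw [pow_succ']
    rw [mul_neg, h1, hxn, neg_neg]

lemma key_pows₂ {R : Type*} [CommRing R] {n : ℕ} (h2 : 2 ≤ n) (hOn : Odd (n-1))
    (hEn2 : Even (n-2)) (x y z : R) (hy : y = -(x^(n-1))) (hz : z = -(y^(n-1)))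
    (hxn : x^n = -1) : z = x := by
  subst hy hz
  rw [hOn.neg_pow, neg_neg, ← pow_mul, show (n-1) * (n-1) = n * (n-2) + 1 from by
      zify [show 1 ≤ n by omega, show 2 ≤ n by omega]; ring,
    pow_succ, pow_mul, hxn, hEn2.neg_one_pow, one_mul]


end NegaMatrix

set_option maxHeartbeats 3200000 in
/-- If `n` is a power of `2` and `x^n + 1 = h · h*` over `F_q` with `h` monic irreducible
of degree `n/2` and `h* ≠ h` its monic reciprocal, then the number of `n × n`
negacirculant matrices `A` over `F_q` with `A Aᵀ = −1` equals `q^(n/2) − 1`; in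
particular self-dual double negacirculant codes of length `2n` over `F_q` exist. -/
theorem card_selfDual_DN_codes_two_factors
    {q n : ℕ} (F : Type*) [Field F] [Fintype F]
    (hcard : Fintype.card F = q) (hodd : Odd q) (hn : ∃ k : ℕ, n = 2 ^ k)
    (h : F[X]) (hmonic : h.Monic) (hirr : Irreducible h)
    (hdeg : h.natDegree = n / 2) (hne : recip h ≠ h)
    (hfact : (X ^ n + 1 : F[X]) = h * recip h) :
    Nat.card {A : Matrix (Fin n) (Fin n) F // IsNegacirculant A ∧ A * A.transpose = -1}
        = q ^ (n / 2) - 1 ∧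
      ∃ A : Matrix (Fin n) (Fin n) F, IsNegacirculant A ∧ A * A.transpose = -1 := by
  classical
  haveI := Fact.mk hirr
  -- numerics
  have hn2 : 2 ≤ n := by
    obtain ⟨k, hk⟩ := hn
    rcases Nat.eq_zero_or_pos k with h0 | h0
    · exfalso
      subst h0
      have h1 : h = 1 := hmonic.natDegree_eq_zero.mp (by rw [hdeg]; omega)
      exact hirr.not_isUnit (h1 ▸ isUnit_one)
    · calc 2 = 2 ^ 1 := rfl
        _ ≤ 2 ^ k := Nat.pow_le_pow_right (by norm_num) h0
        _ = n := hk.symm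
  have heven : n % 2 = 0 := by
    obtain ⟨k, hk⟩ := hn
    rcases Nat.eq_zero_or_pos k with h0 | h0
    · exfalso; subst h0; omega
    · have : (2:ℕ) ∣ 2 ^ k := dvd_pow_self 2 (by omega)
      omega
  set e := n / 2 with hedef
  have hee : e + e = n := by omega
  have hepos : 0 < e := by omega
  have hn1 : 0 < n := by omega
  haveI : NeZero n := ⟨by omega⟩
  have hEn : Even n := ⟨e, by omega⟩
  have hOn : Odd (n - 1) := ⟨e - 1, by omega⟩
  have hEn2 : Even (n - 2) := ⟨e - 1, by omega⟩
  -- polynomial facts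
  set g₀ : F[X] := X ^ n + 1 with hg₀def
  have hg₀monic : g₀.Monic := by
    have := monic_X_pow_add_C (R := F) (a := (1:F)) (n := n) (by omega)
    simpa [hg₀def] using this
  have hg₀deg : g₀.natDegree = n := by
    have := natDegree_X_pow_add_C (R := F) (n := n) (r := (1:F))
    simpa [hg₀def] using this
  have hg₀ne : g₀ ≠ 0 := hg₀monic.ne_zero
  have hhne : h ≠ 0 := hmonic.ne_zero
  have hrmon : (recip h).Monic := hmonic.of_mul_monic_left (by rw [← hfact]; exact hg₀monic)
  have hrne : recip h ≠ 0 := hrmon.ne_zero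
  have hrdeg : (recip h).natDegree = e := by
    have hmul : g₀.natDegree = h.natDegree + (recip h).natDegree := by
      rw [hfact, natDegree_mul hhne hrne]
    omega
  have hc0 : h.coeff 0 ≠ 0 := by
    intro h0
    apply hg₀ne
    have : recip h = 0 := by rw [recip, h0, inv_zero, map_zero, zero_mul]
    rw [hfact, this, mul_zero]
  have hCrec : C (h.coeff 0) * recip h = reverse h := by
    rw [recip, ← mul_assoc, ← C_mul, mul_inv_cancel₀ hc0, C_1, one_mul]
  have hcop : IsCoprime h (recip h) := by
    rw [hirr.coprime_iff_not_dvd]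
    intro hdvd
    obtain ⟨c, hc⟩ := hdvd
    have hcm : c.Monic := hmonic.of_mul_monic_left (hc ▸ hrmon)
    have hcd : c.natDegree = 0 := by
      have h2 := natDegree_mul hhne hcm.ne_zero
      rw [← hc] at h2
      omega
    have : c = 1 := hcm.natDegree_eq_zero.mp hcd
    exact hne (by rw [hc, this, mul_one])
  have hdvd₁ : h ∣ g₀ := ⟨recip h, hfact⟩
  have hdvd₂ : recip h ∣ g₀ := ⟨h, by rw [hfact]; ring⟩
  -- the quotient ring
  set I : Ideal F[X] := Ideal.span {g₀} with hIdef
  set μ : F[X] →+* F[X] ⧸ I := Ideal.Quotient.mk I with hμdef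
  set x : F[X] ⧸ I := μ X with hxdef
  set y₀ : F[X] ⧸ I := μ (-(X ^ (n-1))) with hy₀def
  have hy₀ : y₀ = -(x ^ (n-1)) := by rw [hy₀def, map_neg, map_pow]
  have hμg₀ : μ g₀ = 0 :=
    Ideal.Quotient.eq_zero_iff_mem.mpr (Ideal.subset_span rfl)
  have hxn : x ^ n = -1 := by
    have h2 : x ^ n + 1 = 0 := by
      rw [hxdef, ← map_pow, ← map_one μ, ← map_add]
      exact hμg₀
    linear_combination h2
  have hkey1 := key_pows₁ hn2 hEn hOn x y₀ hy₀ hxn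
  have hy₀n : y₀ ^ n = -1 := hkey1.1
  have hxy : x * y₀ = 1 := hkey1.2
  -- the involution σ
  have hevg₀ : eval₂ (μ.comp C) y₀ g₀ = 0 := by
    rw [hg₀def, eval₂_add, eval₂_X_pow, eval₂_one, hy₀n]
    ring
  have hker : ∀ a ∈ I, eval₂ (μ.comp C) y₀ a = 0 := by
    intro a ha
    rw [hIdef, Ideal.mem_span_singleton] at ha
    obtain ⟨c, rfl⟩ := ha
    rw [← coe_eval₂RingHom, map_mul, coe_eval₂RingHom, hevg₀, zero_mul]
  set σ : F[X] ⧸ I →+* F[X] ⧸ I :=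
    Ideal.Quotient.lift I (eval₂RingHom (μ.comp C) y₀) (fun a ha => hker a ha) with hσdef
  have hσmk : ∀ p : F[X], σ (μ p) = eval₂ (μ.comp C) y₀ p := fun p => rfl
  have hσx : σ x = y₀ := by rw [hxdef, hσmk, eval₂_X]
  have hσy₀ : σ y₀ = x := by
    have h1 : σ y₀ = -(y₀ ^ (n-1)) := by
      conv_lhs => rw [hy₀]
      rw [map_neg, map_pow, hσx]
    exact key_pows₂ hn2 hOn hEn2 x y₀ (σ y₀) hy₀ h1 hxn
  have hσσ : ∀ u, σ (σ u) = u := by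
    intro u
    obtain ⟨p, rfl⟩ := Ideal.Quotient.mk_surjective (I := I) u
    show σ (σ (μ p)) = μ p
    rw [hσmk, hom_eval₂]
    have hcomp : σ.comp (μ.comp C) = μ.comp C := by
      refine RingHom.ext fun c => ?_
      show σ (μ (C c)) = μ (C c)
      rw [hσmk, eval₂_C]
      rfl
    rw [hcomp, hσy₀, hxdef, hμdef, quot_mk_eval₂]
  -- the matrix representation Φ
  have hNn : aeval (Nmat F n) g₀ = 0 := by
    rw [hg₀def, map_add, map_pow, aeval_X, map_one, Nmat_pow_n hn1]
    abel
  have hkerN : ∀ a ∈ I, (aeval (Nmat F n)).toRingHom a = 0 := by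
    intro a ha
    rw [hIdef, Ideal.mem_span_singleton] at ha
    obtain ⟨c, rfl⟩ := ha
    show aeval (Nmat F n) (g₀ * c) = 0
    rw [map_mul, hNn, zero_mul]
  set Φ : F[X] ⧸ I →+* Matrix (Fin n) (Fin n) F :=
    Ideal.Quotient.lift I (aeval (Nmat F n)).toRingHom hkerN with hΦdef
  have hΦmk : ∀ p : F[X], Φ (μ p) = aeval (Nmat F n) p := fun p => rfl
  have hΦσ : ∀ u, Φ (σ u) = (Φ u).transpose := by
    intro u
    obtain ⟨p, rfl⟩ := Ideal.Quotient.mk_surjective (I := I) u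
    show Φ (σ (μ p)) = (Φ (μ p)).transpose
    rw [hσmk, hom_eval₂]
    have hcomp : Φ.comp (μ.comp C) = algebraMap F (Matrix (Fin n) (Fin n) F) := by
      refine RingHom.ext fun c => ?_
      show Φ (μ (C c)) = _
      rw [hΦmk, aeval_C]
    have hy : (aeval (Nmat F n)) (-(X ^ (n-1)) : F[X]) = (Nmat F n).transpose := by
      rw [map_neg, map_pow, aeval_X, Nmat_transpose]
    rw [hΦmk (-(X ^ (n-1))), hy, hcomp, hΦmk p, transpose_aeval, aeval_def]
  -- ρ surjectivity : every element of the quotient comes from some `a`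
  have hρsurj : ∀ u : F[X] ⧸ I, ∃ a : Fin n → F, u = μ (pa a) := by
    intro u
    obtain ⟨p, rfl⟩ := Ideal.Quotient.mk_surjective (I := I) u
    refine ⟨fun t => (p %ₘ g₀).coeff t, ?_⟩
    have hdeglt : (p %ₘ g₀).natDegree < n := by
      rcases eq_or_ne (p %ₘ g₀) 0 with h0 | h0
      · rw [h0, natDegree_zero]; omega
      · have h1 : (p %ₘ g₀).degree < g₀.degree := degree_modByMonic_lt p hg₀monic
        have h2 : g₀.degree = (n : ℕ) := by
          rw [hg₀def, show ((1:F[X]) = C 1) from (map_one C).symm]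
          exact degree_X_pow_add_C hn1 1
        rw [h2] at h1
        exact (natDegree_lt_iff_degree_lt h0).mpr h1
    rw [pa_eq _ hdeglt]
    have : μ (p %ₘ g₀) = μ p := by
      rw [hμdef, Ideal.Quotient.mk_eq_mk_iff_sub_mem]
      rw [hIdef, Ideal.mem_span_singleton]
      exact ⟨-(p /ₘ g₀), by linear_combination (modByMonic_add_div p g₀)⟩
    rw [this]
  have hΦinj : Function.Injective Φ := by
    rw [injective_iff_map_eq_zero]
    intro u hu
    obtain ⟨a, rfl⟩ := hρsurj u
    rw [hΦmk] at hu
    have ha : a = 0 := by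
      funext j
      have h2 := congrFun (congrFun hu (0 : Fin n)) j
      rw [aeval_pa_apply, if_pos (by simp), sub_zero] at h2
      simpa using h2
    rw [ha, pa_zero, map_zero]
  -- the two residue fields
  set π₁ : F[X] ⧸ I →+* AdjoinRoot h :=
    Ideal.Quotient.factor (Ideal.span_singleton_le_span_singleton.mpr hdvd₁)
    with hπ₁def
  set π₂ : F[X] ⧸ I →+* AdjoinRoot (recip h) :=
    Ideal.Quotient.factor
      (Ideal.span_singleton_le_span_singleton.mpr hdvd₂) with hπ₂def
  have hπ₁mk : ∀ p : F[X], π₁ (μ p) = AdjoinRoot.mk h p := fun p =>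
    Ideal.Quotient.factor_mk _ p
  have hπ₂mk : ∀ p : F[X], π₂ (μ p) = AdjoinRoot.mk (recip h) p := fun p =>
    Ideal.Quotient.factor_mk _ p
  -- CRT
  have CRTinj : ∀ u u' : F[X] ⧸ I, π₁ u = π₁ u' → π₂ u = π₂ u' → u = u' := by
    intro u u' h1 h2
    obtain ⟨p, rfl⟩ := Ideal.Quotient.mk_surjective (I := I) u
    obtain ⟨p', rfl⟩ := Ideal.Quotient.mk_surjective (I := I) u'
    rw [show Ideal.Quotient.mk I p = μ p from rfl, show Ideal.Quotient.mk I p' = μ p' from rfl,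
      hπ₁mk, hπ₁mk, AdjoinRoot.mk_eq_mk] at h1
    rw [show Ideal.Quotient.mk I p = μ p from rfl, show Ideal.Quotient.mk I p' = μ p' from rfl,
      hπ₂mk, hπ₂mk, AdjoinRoot.mk_eq_mk] at h2
    show μ p = μ p'
    rw [hμdef, Ideal.Quotient.mk_eq_mk_iff_sub_mem, hIdef, Ideal.mem_span_singleton, hfact]
    exact hcop.mul_dvd h1 h2
  have CRTsurj : ∀ (v : AdjoinRoot h) (w : AdjoinRoot (recip h)),
      ∃ u : F[X] ⧸ I, π₁ u = v ∧ π₂ u = w := by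
    intro v w
    obtain ⟨pv, rfl⟩ := AdjoinRoot.mk_surjective v
    obtain ⟨pw, rfl⟩ := AdjoinRoot.mk_surjective w
    obtain ⟨c, d, hcd⟩ := hcop
    have hd : d * recip h = 1 - c * h := by linear_combination hcd
    refine ⟨μ (c * h * pw + d * recip h * pv), ?_, ?_⟩
    · rw [hπ₁mk, AdjoinRoot.mk_eq_mk]
      exact ⟨c * (pw - pv), by linear_combination pv * hd⟩
    · rw [hπ₂mk, AdjoinRoot.mk_eq_mk]
      have hc : c * h = 1 - d * recip h := by linear_combination hcd
      exact ⟨d * (pv - pw), by linear_combination pw * hc⟩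
  -- roots and evaluation facts
  have hπ₁x : π₁ x = AdjoinRoot.root h := hπ₁mk X
  have hπ₂x : π₂ x = AdjoinRoot.root (recip h) := hπ₂mk X
  have hcomp₁ : π₁.comp (μ.comp C) = AdjoinRoot.of h := by
    refine RingHom.ext fun c => ?_
    show π₁ (μ (C c)) = _
    rw [hπ₁mk]
    rfl
  have hcomp₂ : π₂.comp (μ.comp C) = AdjoinRoot.of (recip h) := by
    refine RingHom.ext fun c => ?_
    show π₂ (μ (C c)) = _
    rw [hπ₂mk]
    rfl
  -- the swap maps τ : K₁ → K₂ and τ' : K₂ → K₁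
  have hkillτ : π₂ (σ (μ h)) = 0 := by
    rw [hσmk, hom_eval₂, hcomp₂]
    set β₂ : AdjoinRoot (recip h) := π₂ y₀ with hβ₂def
    have hab : AdjoinRoot.root (recip h) * β₂ = 1 := by
      rw [hβ₂def, ← hπ₂x, ← map_mul, hxy, map_one]
    letI : Invertible β₂ := ⟨AdjoinRoot.root (recip h), hab, by rw [mul_comm]; exact hab⟩
    have hrev := eval₂_reverse_mul_pow (AdjoinRoot.of (recip h)) β₂ h
    have hinv : (⅟β₂ : AdjoinRoot (recip h)) = AdjoinRoot.root (recip h) := rfl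
    rw [hinv] at hrev
    have hz : eval₂ (AdjoinRoot.of (recip h)) (AdjoinRoot.root (recip h)) (reverse h) = 0 := by
      rw [← hCrec, eval₂_mul, eval₂_C, AdjoinRoot.eval₂_root, mul_zero]
    rw [hz, zero_mul] at hrev
    exact hrev.symm
  have hkillτ' : π₁ (σ (μ (recip h))) = 0 := by
    rw [hσmk, hom_eval₂, hcomp₁]
    set β₁ : AdjoinRoot h := π₁ y₀ with hβ₁def
    have hab : AdjoinRoot.root h * β₁ = 1 := by
      rw [hβ₁def, ← hπ₁x, ← map_mul, hxy, map_one]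
    letI : Invertible (AdjoinRoot.root h) := ⟨β₁, by rw [mul_comm]; exact hab, hab⟩
    have hrev := eval₂_reverse_mul_pow (AdjoinRoot.of h) (AdjoinRoot.root h) h
    have hinv : (⅟(AdjoinRoot.root h) : AdjoinRoot h) = β₁ := rfl
    rw [hinv, AdjoinRoot.eval₂_root] at hrev
    have hz : eval₂ (AdjoinRoot.of h) β₁ (reverse h) = 0 := by
      have h2 : eval₂ (AdjoinRoot.of h) β₁ (reverse h) *
          (AdjoinRoot.root h * β₁) ^ h.natDegree = 0 := by
        rw [mul_pow, ← mul_assoc, hrev, zero_mul]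
      rwa [hab, one_pow, mul_one] at h2
    rw [recip, eval₂_mul, eval₂_C, hz, mul_zero]
  have hkillτI : ∀ a ∈ Ideal.span {h}, ((π₂.comp σ).comp μ) a = 0 := by
    intro a ha
    rw [Ideal.mem_span_singleton] at ha
    obtain ⟨c, rfl⟩ := ha
    show π₂ (σ (μ (h * c))) = 0
    rw [map_mul, map_mul, map_mul, hkillτ, zero_mul]
  have hkillτ'I : ∀ a ∈ Ideal.span {recip h}, ((π₁.comp σ).comp μ) a = 0 := by
    intro a ha
    rw [Ideal.mem_span_singleton] at ha
    obtain ⟨c, rfl⟩ := ha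
    show π₁ (σ (μ (recip h * c))) = 0
    rw [map_mul, map_mul, map_mul, hkillτ', zero_mul]
  set τ : AdjoinRoot h →+* AdjoinRoot (recip h) :=
    Ideal.Quotient.lift (Ideal.span {h}) ((π₂.comp σ).comp μ) hkillτI with hτdef
  set τ' : AdjoinRoot (recip h) →+* AdjoinRoot h :=
    Ideal.Quotient.lift (Ideal.span {recip h}) ((π₁.comp σ).comp μ) hkillτ'I with hτ'def
  have hτ : ∀ u : F[X] ⧸ I, τ (π₁ u) = π₂ (σ u) := by
    intro u
    obtain ⟨p, rfl⟩ := Ideal.Quotient.mk_surjective (I := I) u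
    rw [show Ideal.Quotient.mk I p = μ p from rfl, hπ₁mk, hτdef]
    exact Ideal.Quotient.lift_mk _ _ _
  have hτ' : ∀ u : F[X] ⧸ I, τ' (π₂ u) = π₁ (σ u) := by
    intro u
    obtain ⟨p, rfl⟩ := Ideal.Quotient.mk_surjective (I := I) u
    rw [show Ideal.Quotient.mk I p = μ p from rfl, hπ₂mk, hτ'def]
    exact Ideal.Quotient.lift_mk _ _ _
  -- representation of negacirculant solution matrices
  have hmatrep : ∀ A : Matrix (Fin n) (Fin n) F, IsNegacirculant A →
      Φ (μ (pa (fun j => A 0 j))) = A := by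
    rintro A ⟨a, haA⟩
    have h0 : (fun j => A 0 j) = a := by
      funext j
      rw [haA 0 j, if_pos (by simp), sub_zero]
    rw [h0, hΦmk]
    ext i j
    rw [aeval_pa_apply, ← haA i j]
  have hcond : ∀ A : Matrix (Fin n) (Fin n) F, IsNegacirculant A → A * A.transpose = -1 →
      (μ (pa (fun j => A 0 j))) * σ (μ (pa (fun j => A 0 j))) = -1 := by
    intro A hA hA2
    apply hΦinj
    rw [map_mul, map_neg, map_one, hΦσ, hmatrep A hA]
    exact hA2
  have hπ₁ne : ∀ u : F[X] ⧸ I, u * σ u = -1 → π₁ u ≠ 0 := by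
    intro u hu h0
    have h1 : π₁ u * π₁ (σ u) = -1 := by rw [← map_mul, hu, map_neg, map_one]
    rw [h0, zero_mul] at h1
    exact one_ne_zero (α := AdjoinRoot h) (by linear_combination h1)
  have hdet : ∀ u : F[X] ⧸ I, u * σ u = -1 → π₂ u * τ (π₁ u) = -1 := by
    intro u hu
    rw [hτ u, ← map_mul, hu, map_neg, map_one]
  have hinj2 : ∀ u u' : F[X] ⧸ I, u * σ u = -1 → u' * σ u' = -1 → π₁ u = π₁ u' → u = u' := by
    intro u u' hu hu' hππ
    have h1 := hdet u hu
    have h2 := hdet u' hu'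
    rw [hππ] at h1
    obtain ⟨d, hd⟩ : ∃ d, τ (π₁ u') * d = 1 := ⟨-(π₂ u), by linear_combination -h1⟩
    refine CRTinj u u' hππ ?_
    linear_combination (π₂ u' - π₂ u) * hd + d * h1 - d * h2
  have hsurj2 : ∀ v : AdjoinRoot h, v ≠ 0 → ∃ u, u * σ u = -1 ∧ π₁ u = v := by
    intro v hv
    have hvu : IsUnit (τ v) := (isUnit_iff_ne_zero.mpr hv).map τ
    obtain ⟨w₀, hw₀⟩ := hvu.exists_right_inv
    obtain ⟨u, hu1, hu2⟩ := CRTsurj v (-w₀)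
    have hvv : τ' (τ v) = v := by
      rw [← hu1, hτ u, hτ' (σ u), hσσ u]
    refine ⟨u, ?_, hu1⟩
    apply CRTinj
    · rw [map_mul, map_neg, map_one, hu1, ← hτ' u, hu2, map_neg]
      have h4 := congrArg τ' hw₀
      rw [map_mul, map_one, hvv] at h4
      linear_combination -h4
    · rw [map_mul, map_neg, map_one, hu2, ← hτ u, hu1]
      linear_combination -hw₀
  -- the bijection
  have hπ₁ne' : ∀ A : {A : Matrix (Fin n) (Fin n) F // IsNegacirculant A ∧ A * A.transpose = -1},
      π₁ (μ (pa (fun j => A.1 0 j))) ≠ 0 := fun A => hπ₁ne _ (hcond A.1 A.2.1 A.2.2)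
  set f : {A : Matrix (Fin n) (Fin n) F // IsNegacirculant A ∧ A * A.transpose = -1} →
      {v : AdjoinRoot h // v ≠ 0} := fun A => ⟨π₁ (μ (pa (fun j => A.1 0 j))), hπ₁ne' A⟩
    with hfdef
  have hfbij : Function.Bijective f := by
    constructor
    · rintro ⟨A, hA⟩ ⟨A', hA'⟩ hff
      have hval : π₁ (μ (pa (fun j => A 0 j))) = π₁ (μ (pa (fun j => A' 0 j))) := by
        have := congrArg Subtype.val hff
        exact this
      have h1 : μ (pa (fun j => A 0 j)) = μ (pa (fun j => A' 0 j)) :=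
        hinj2 _ _ (hcond A hA.1 hA.2) (hcond A' hA'.1 hA'.2) hval
      have h2 : A = A' := by
        rw [← hmatrep A hA.1, ← hmatrep A' hA'.1, h1]
      exact Subtype.ext h2
    · rintro ⟨v, hv⟩
      obtain ⟨u, hu, huv⟩ := hsurj2 v hv
      obtain ⟨a, rfl⟩ := hρsurj u
      have hnega : IsNegacirculant (Φ (μ (pa a))) := by
        refine ⟨a, fun i j => ?_⟩
        rw [hΦmk, aeval_pa_apply]
      have hAAt : Φ (μ (pa a)) * (Φ (μ (pa a))).transpose = -1 := by
        rw [← hΦσ, ← map_mul, hu, map_neg, map_one]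
      refine ⟨⟨Φ (μ (pa a)), hnega, hAAt⟩, ?_⟩
      apply Subtype.ext
      show π₁ (μ (pa (fun j => (Φ (μ (pa a))) 0 j))) = v
      have h0 : (fun j => (Φ (μ (pa a))) 0 j) = a := by
        funext j
        rw [hΦmk, aeval_pa_apply, if_pos (by simp), sub_zero]
      rw [h0, huv]
  -- cardinality
  haveI : Fintype (AdjoinRoot h) := Module.fintypeOfFintype (AdjoinRoot.powerBasisAux' hmonic)
  have hcardK : Nat.card (AdjoinRoot h) = q ^ e := by
    rw [Nat.card_eq_fintype_card, Module.card_fintype (AdjoinRoot.powerBasisAux' hmonic),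
      hcard, Fintype.card_fin, hdeg]
  have hcount : Nat.card
      {A : Matrix (Fin n) (Fin n) F // IsNegacirculant A ∧ A * A.transpose = -1} = q ^ e - 1 := by
    rw [Nat.card_congr (Equiv.ofBijective f hfbij),
      Nat.card_congr (unitsEquivNeZero (G₀ := AdjoinRoot h)).symm, Nat.card_units, hcardK]
  refine ⟨hcount, ?_⟩
  obtain ⟨⟨A, hA⟩, -⟩ := hfbij.2 ⟨1, one_ne_zero⟩
  exact ⟨A, hA⟩
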